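/- Let G be a g-chromatic graph of order n, let 1 <= m <= n-1, and suppose g(c) <= (|E(G)|/(n-m)) * f(c) for all colors c. If G has no f-chromatic spanning forest with exactly m components, then |E(G)| <= C(n-m, 2). -/

import Mathlib

open SimpleGraph Finset

/-- Number of connected components of a graph. -/
noncomputable def omega {V : Type*} (G : SimpleGraph V) : ℕ :=
  Nat.card G.ConnectedComponent

/-- Number of edges of `G` having color `c`. -/
noncomputable def colorCount {V C : Type*} (G : SimpleGraph V)
    (color : Sym2 V → C) (c : C) : ℕ :=
  Nat.card {e : Sym2 V // e ∈ G.edgeSet ∧ color e = c}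

/-- `G` is `f`-chromatic: each color `c` appears on at most `f c` edges. -/
def IsChromatic {V C : Type*} (G : SimpleGraph V)
    (color : Sym2 V → C) (f : C → ℕ) : Prop :=
  ∀ c, colorCount G color c ≤ f c

/-- `G - E_R(G)` : delete all edges whose color lies in `R`. -/
def delR {V C : Type*} (G : SimpleGraph V) (color : Sym2 V → C)
    (R : Finset C) : SimpleGraph V :=
  G.deleteEdges {e | color e ∈ R}


set_option linter.unusedSectionVars false

namespace Aux17

variable {V : Type*} [Fintype V] {G G' F H K K' : SimpleGraph V} {CO : Type*} [DecidableEq CO]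



/-- Map on connected components induced by a subgraph inclusion. -/
noncomputable def ccMap (h : G' ≤ G) : G'.ConnectedComponent → G.ConnectedComponent :=
  ConnectedComponent.map (Hom.ofLE h)

lemma ccMap_mk (h : G' ≤ G) (v : V) :
    ccMap h (G'.connectedComponentMk v) = G.connectedComponentMk v :=
  ConnectedComponent.map_mk _ _

lemma ccMap_surjective (h : G' ≤ G) : Function.Surjective (ccMap h) := by
  intro K
  obtain ⟨v, rfl⟩ := K.exists_rep
  exact ⟨G'.connectedComponentMk v, ccMap_mk h v⟩

lemma omega_le_of_le (h : G' ≤ G) : omega G ≤ omega G' :=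
  Nat.card_le_card_of_surjective (ccMap h) (ccMap_surjective h)

lemma omega_le_card (G : SimpleGraph V) : omega G ≤ Fintype.card V := by
  have hs : Function.Surjective (G.connectedComponentMk) := fun K => K.exists_rep
  calc omega G = Nat.card G.ConnectedComponent := rfl
    _ ≤ Nat.card V := Nat.card_le_card_of_surjective _ hs
    _ = Fintype.card V := Nat.card_eq_fintype_card

/-- Walks in `G` yield reachability in `G` minus an edge, up to the endpoints of
the removed edge. -/
lemma walk_reach {u v a b : V} (w : G.Walk a b) :
    (G.deleteEdges {s(u,v)}).Reachable a b ∨ (G.deleteEdges {s(u,v)}).Reachable a u ∨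
      (G.deleteEdges {s(u,v)}).Reachable a v := by
  induction w with
  | nil => exact Or.inl (Reachable.refl _)
  | @cons a c b hadj p ih =>
    by_cases hec : s(a, c) = s(u, v)
    · rw [Sym2.eq_iff] at hec
      rcases hec with ⟨rfl, rfl⟩ | ⟨rfl, rfl⟩
      · exact Or.inr (Or.inl (Reachable.refl _))
      · exact Or.inr (Or.inr (Reachable.refl _))
    · have hadj' : (G.deleteEdges {s(u,v)}).Adj a c := by
        rw [deleteEdges_adj]
        exact ⟨hadj, by simpa using hec⟩
      rcases ih with h1 | h2 | h3
      · exact Or.inl (hadj'.reachable.trans h1)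
      · exact Or.inr (Or.inl (hadj'.reachable.trans h2))
      · exact Or.inr (Or.inr (hadj'.reachable.trans h3))

/-- Deleting one edge increases the number of components by at most one. -/
lemma omega_deleteEdge_le (u v : V) :
    omega (G.deleteEdges {s(u,v)}) ≤ omega G + 1 := by
  classical
  set G' := G.deleteEdges {s(u,v)} with hG'
  have hle : G' ≤ G := deleteEdges_le _
  let ι : G'.ConnectedComponent → G.ConnectedComponent ⊕ Unit := fun K =>
    if K = G'.connectedComponentMk u then Sum.inr () else Sum.inl (ccMap hle K)
  have hinj : Function.Injective ι := by
    intro K1 K2 hK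
    by_cases h1 : K1 = G'.connectedComponentMk u <;>
      by_cases h2 : K2 = G'.connectedComponentMk u
    · rw [h1, h2]
    · simp only [ι, if_pos h1, if_neg h2] at hK; exact absurd hK (by simp)
    · simp only [ι, if_neg h1, if_pos h2] at hK; exact absurd hK (by simp)
    · simp only [ι, if_neg h1, if_neg h2, Sum.inl.injEq] at hK
      obtain ⟨a, rfl⟩ := K1.exists_rep
      obtain ⟨b, rfl⟩ := K2.exists_rep
      replace hK : G.connectedComponentMk a = G.connectedComponentMk b := by
        rw [← ccMap_mk hle a, ← ccMap_mk hle b]; exact hK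
      rw [ConnectedComponent.eq] at hK
      obtain ⟨w⟩ := hK
      rcases walk_reach (u := u) (v := v) w with hr | hr | hr
      · exact ConnectedComponent.sound hr
      · exact absurd (ConnectedComponent.sound hr) h1
      · rcases walk_reach (u := u) (v := v) w.reverse with hr' | hr' | hr'
        · exact (ConnectedComponent.sound hr').symm
        · exact absurd (ConnectedComponent.sound hr') h2
        · exact (ConnectedComponent.sound hr).trans (ConnectedComponent.sound hr').symm
  calc omega G' ≤ Nat.card (G.ConnectedComponent ⊕ Unit) :=
        Nat.card_le_card_of_injective ι hinj
    _ = omega G + 1 := by simp [Nat.card_sum, omega]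

/-- Deleting an edge whose endpoints remain reachable does not change components. -/
lemma omega_deleteEdge_eq {u v : V}
    (hr : (G.deleteEdges {s(u,v)}).Reachable u v) :
    omega (G.deleteEdges {s(u,v)}) = omega G := by
  set G' := G.deleteEdges {s(u,v)} with hG'
  have hle : G' ≤ G := deleteEdges_le _
  have hinj : Function.Injective (ccMap hle) := by
    intro K1 K2 hK
    obtain ⟨a, rfl⟩ := K1.exists_rep
    obtain ⟨b, rfl⟩ := K2.exists_rep
    replace hK : G.connectedComponentMk a = G.connectedComponentMk b := by
      rw [← ccMap_mk hle a, ← ccMap_mk hle b]; exact hK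
    rw [ConnectedComponent.eq] at hK
    obtain ⟨w⟩ := hK
    apply ConnectedComponent.sound
    induction w with
    | nil => exact Reachable.refl _
    | @cons a c b hadj p ih =>
      refine Reachable.trans ?_ ih
      by_cases hec : s(a, c) = s(u, v)
      · rw [Sym2.eq_iff] at hec
        rcases hec with ⟨rfl, rfl⟩ | ⟨rfl, rfl⟩
        · exact hr
        · exact hr.symm
      · exact Adj.reachable (by rw [hG', deleteEdges_adj]; exact ⟨hadj, by simpa using hec⟩)
  exact Nat.card_eq_of_bijective _ ⟨hinj, ccMap_surjective hle⟩

/-- Deleting a bridge increases the number of components. -/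
lemma omega_deleteEdge_ge {u v : V} (hadj : G.Adj u v)
    (hbr : ¬ (G.deleteEdges {s(u,v)}).Reachable u v) :
    omega G + 1 ≤ omega (G.deleteEdges {s(u,v)}) := by
  set G' := G.deleteEdges {s(u,v)} with hG'
  have hle : G' ≤ G := deleteEdges_le _
  have h1 : omega G ≤ omega G' := omega_le_of_le hle
  rcases lt_or_eq_of_le h1 with h | h
  · omega
  · exfalso
    have hbij : Function.Bijective (ccMap hle) :=
      (ccMap_surjective hle).bijective_of_nat_card_le (le_of_eq h.symm)
    apply hbr
    rw [← ConnectedComponent.eq]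
    apply hbij.injective
    rw [ccMap_mk, ccMap_mk, ConnectedComponent.eq]
    exact hadj.reachable

lemma isAcyclic_anti (h : H ≤ G) (hG : G.IsAcyclic) : H.IsAcyclic := by
  intro v c hc
  exact hG (c.mapLe h) (hc.mapLe h)

lemma omega_bot : omega (⊥ : SimpleGraph V) = Fintype.card V := by
  have : Function.Bijective ((⊥ : SimpleGraph V).connectedComponentMk) := by
    constructor
    · intro a b hab
      exact reachable_bot.mp (ConnectedComponent.exact hab)
    · exact fun K => K.exists_rep
  calc omega (⊥ : SimpleGraph V) = Nat.card V := (Nat.card_eq_of_bijective _ this).symm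
    _ = Fintype.card V := Nat.card_eq_fintype_card

lemma edgeSet_ncard_deleteEdges_lt {e : Sym2 V} (he : e ∈ G.edgeSet) :
    (G.deleteEdges {e}).edgeSet.ncard < G.edgeSet.ncard := by
  rw [edgeSet_deleteEdges]
  exact Set.ncard_diff_singleton_lt_of_mem he (Set.toFinite _)

/-- Walks survive deleting an edge whose ends stay reachable. -/
lemma reach_deleteEdge {u v : V} (hr : (G.deleteEdges {s(u,v)}).Reachable u v)
    {a b : V} (h : G.Reachable a b) : (G.deleteEdges {s(u,v)}).Reachable a b := by
  obtain ⟨w⟩ := h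
  induction w with
  | nil => exact Reachable.refl _
  | @cons a c b hadj p ih =>
    refine Reachable.trans ?_ ih
    by_cases hec : s(a, c) = s(u, v)
    · rw [Sym2.eq_iff] at hec
      rcases hec with ⟨rfl, rfl⟩ | ⟨rfl, rfl⟩
      · exact hr
      · exact hr.symm
    · exact Adj.reachable (by rw [deleteEdges_adj]; exact ⟨hadj, by simpa using hec⟩)

/-- Every graph contains a spanning forest (same reachability). -/
lemma exists_spanning_forest (G : SimpleGraph V) :
    ∃ F ≤ G, F.IsAcyclic ∧ ∀ a b : V, G.Reachable a b → F.Reachable a b := by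
  generalize hk : G.edgeSet.ncard = k
  induction k using Nat.strong_induction_on generalizing G with
  | _ k ih =>
    by_cases hG : G.IsAcyclic
    · exact ⟨G, le_refl G, hG, fun a b h => h⟩
    · rw [isAcyclic_iff_forall_adj_isBridge] at hG
      push_neg at hG
      obtain ⟨u, v, hadj, hbr⟩ := hG
      rw [isBridge_iff] at hbr
      push_neg at hbr
      have hr : (G.deleteEdges {s(u,v)}).Reachable u v := hbr
      have hlt : (G.deleteEdges {s(u,v)}).edgeSet.ncard < k :=
        hk ▸ edgeSet_ncard_deleteEdges_lt hadj
      obtain ⟨F, hF1, hF2, hF3⟩ := ih _ hlt (G.deleteEdges {s(u,v)}) rfl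
      exact ⟨F, hF1.trans (deleteEdges_le _), hF2,
        fun a b h => hF3 a b (reach_deleteEdge hr h)⟩

/-- A subgraph with the same reachability has the same number of components. -/
lemma omega_eq_of_reach (hle : F ≤ G)
    (h : ∀ a b : V, G.Reachable a b → F.Reachable a b) : omega F = omega G := by
  have hinj : Function.Injective
      (ConnectedComponent.map (Hom.ofLE hle)) := by
    intro K1 K2 hK
    obtain ⟨a, rfl⟩ := K1.exists_rep
    obtain ⟨b, rfl⟩ := K2.exists_rep
    have hK' : G.connectedComponentMk a = G.connectedComponentMk b := hK
    exact ConnectedComponent.sound (h a b (ConnectedComponent.exact hK'))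
  have hsurj : Function.Surjective
      (ConnectedComponent.map (Hom.ofLE hle)) := by
    intro K
    obtain ⟨v, rfl⟩ := K.exists_rep
    exact ⟨F.connectedComponentMk v, ConnectedComponent.map_mk _ _⟩
  exact Nat.card_eq_of_bijective _ ⟨hinj, hsurj⟩

/-- Trim an acyclic graph down to exactly `m` components. -/
lemma trim (m : ℕ) (hm : m ≤ Fintype.card V) :
    ∀ (F : SimpleGraph V), F.IsAcyclic → omega F ≤ m →
      ∃ F' ≤ F, F'.IsAcyclic ∧ omega F' = m := by
  intro F
  generalize hk : F.edgeSet.ncard = k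
  induction k using Nat.strong_induction_on generalizing F with
  | _ k ih =>
    intro hac hom
    rcases eq_or_lt_of_le hom with heq | hlt
    · exact ⟨F, le_refl F, hac, heq⟩
    · have hne : F ≠ ⊥ := by
        rintro rfl
        rw [omega_bot] at hlt
        omega
      obtain ⟨e, he⟩ := (edgeSet_nonempty).mpr hne
      induction e using Sym2.ind with
      | _ u v =>
        have hadj : F.Adj u v := he
        have hbr := (isAcyclic_iff_forall_adj_isBridge.mp hac hadj)
        have hbr' : ¬ (F.deleteEdges {s(u,v)}).Reachable u v := hbr
        have h1 := omega_deleteEdge_ge hadj hbr'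
        have h2 := omega_deleteEdge_le (G := F) u v
        have hlt' : (F.deleteEdges {s(u,v)}).edgeSet.ncard < k :=
          hk ▸ edgeSet_ncard_deleteEdges_lt he
        obtain ⟨F', hF1, hF2, hF3⟩ := ih _ hlt' (F.deleteEdges {s(u,v)}) rfl
          (isAcyclic_anti (deleteEdges_le _) hac) (by omega)
        exact ⟨F', hF1.trans (deleteEdges_le _), hF2, hF3⟩

/-- `e` is a bridge of `H` (component-counting formulation). -/
def BrgE (H : SimpleGraph V) (e : Sym2 V) : Prop :=
  e ∈ H.edgeSet ∧ omega H + 1 ≤ omega (H.deleteEdges {e})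

lemma omega_deleteEdges_single_le (H : SimpleGraph V) (e : Sym2 V) :
    omega (H.deleteEdges {e}) ≤ omega H + 1 := by
  induction e using Sym2.ind with
  | _ u v => exact omega_deleteEdge_le u v

lemma brgE_not_reachable {u v : V} (h : BrgE H s(u,v)) :
    ¬ (H.deleteEdges {s(u,v)}).Reachable u v := by
  intro hr
  have h2 := h.2
  have := omega_deleteEdge_eq (G := H) hr
  omega
  
lemma brgE_of_not_reachable {u v : V} (hadj : H.Adj u v)
    (h : ¬ (H.deleteEdges {s(u,v)}).Reachable u v) : BrgE H s(u,v) :=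
  ⟨hadj, omega_deleteEdge_ge hadj h⟩

lemma brgE_anti (hle : H' ≤ H) (e : Sym2 V) (he : e ∈ H'.edgeSet)
    (h : BrgE H e) : BrgE H' e := by
  induction e using Sym2.ind with
  | _ u v =>
    have hnr := brgE_not_reachable h
    refine brgE_of_not_reachable he (fun hr => hnr ?_)
    exact hr.mono (deleteEdges_mono hle)

/-- Deleting a finite set of bridges increases components by the number of bridges. -/
lemma omega_deleteEdges_bridges (B : Finset (Sym2 V)) :
    ∀ (H : SimpleGraph V), (∀ e ∈ B, BrgE H e) →
      omega H + B.card ≤ omega (H.deleteEdges ↑B) := by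
  classical
  induction B using Finset.induction_on with
  | empty => intro H _; simp
  | @insert b B hb ih =>
    intro H hall
    have hset : (↑(insert b B) : Set (Sym2 V)) = {b} ∪ ↑B := by
      ext x; simp [or_comm]
    have hdel : H.deleteEdges ↑(insert b B) = (H.deleteEdges {b}).deleteEdges ↑B := by
      rw [deleteEdges_deleteEdges, hset]
    have hbB : BrgE H b := hall b (mem_insert_self _ _)
    have hrest : ∀ e ∈ B, BrgE (H.deleteEdges {b}) e := by
      intro e heB
      refine brgE_anti (deleteEdges_le _) e ?_ (hall e (mem_insert_of_mem heB))
      rw [edgeSet_deleteEdges]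
      exact ⟨(hall e (mem_insert_of_mem heB)).1, by
        simp only [Set.mem_singleton_iff]
        rintro rfl; exact hb heB⟩
    have h1 := ih (H.deleteEdges {b}) hrest
    have h2 := hbB.2
    rw [hdel, card_insert_of_notMem hb]
    omega

/-- the key exchange inequality for a single edge. -/
lemma inc2 (hle : K' ≤ K) (e : Sym2 V) (he : e ∈ K'.edgeSet) :
    omega (K.deleteEdges {e}) + omega K' ≤ omega (K'.deleteEdges {e}) + omega K := by
  induction e using Sym2.ind with
  | _ u v =>
    by_cases hr : (K.deleteEdges {s(u,v)}).Reachable u v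
    · have h1 := omega_deleteEdge_eq (G := K) hr
      have h2 := omega_le_of_le (G := K') (G' := K'.deleteEdges {s(u,v)}) (deleteEdges_le _)
      omega
    · have heK : s(u,v) ∈ K.edgeSet := edgeSet_mono hle he
      have hnr' : ¬ (K'.deleteEdges {s(u,v)}).Reachable u v := fun hr' =>
        hr (hr'.mono (deleteEdges_mono hle))
      have h1 := omega_deleteEdge_le (G := K) u v
      have h2 := omega_deleteEdge_ge (G := K') ((K'.mem_edgeSet).mp he) hnr'
      have h3 := omega_le_of_le hle
      omega

/-- Telescoped diminishing-returns inequality. -/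
lemma tel (S S' : Set (Sym2 V)) (hSS : S ⊆ S') (D : Finset (Sym2 V))
    (hD : ∀ e ∈ D, e ∈ G.edgeSet ∧ e ∉ S') :
    omega (G.deleteEdges (S ∪ ↑D)) + omega (G.deleteEdges S') ≤
      omega (G.deleteEdges (S' ∪ ↑D)) + omega (G.deleteEdges S) := by
  classical
  induction D using Finset.induction_on with
  | empty => simp only [Finset.coe_empty, Set.union_empty]; omega
  | @insert b D hb ih =>
    have hD' : ∀ e ∈ D, e ∈ G.edgeSet ∧ e ∉ S' := fun e he => hD e (mem_insert_of_mem he)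
    have hbG := hD b (mem_insert_self _ _)
    have hins : ∀ (T : Set (Sym2 V)), T ∪ ↑(insert b D) = (T ∪ ↑D) ∪ {b} := by
      intro T; ext x; simp only [Set.mem_union, Finset.coe_insert, Set.mem_insert_iff,
        Finset.mem_coe, Set.mem_singleton_iff]; tauto
    have e1 : G.deleteEdges (S ∪ ↑(insert b D)) =
        (G.deleteEdges (S ∪ ↑D)).deleteEdges {b} := by
      rw [deleteEdges_deleteEdges, hins]
    have e2 : G.deleteEdges (S' ∪ ↑(insert b D)) =
        (G.deleteEdges (S' ∪ ↑D)).deleteEdges {b} := by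
      rw [deleteEdges_deleteEdges, hins]
    have hKK : G.deleteEdges (S' ∪ ↑D) ≤ G.deleteEdges (S ∪ ↑D) :=
      deleteEdges_anti (Set.union_subset_union_left _ hSS)
    have hbe : b ∈ (G.deleteEdges (S' ∪ ↑D)).edgeSet := by
      rw [edgeSet_deleteEdges]
      refine ⟨hbG.1, ?_⟩
      simp only [Set.mem_union, Finset.mem_coe]
      push_neg
      exact ⟨hbG.2, hb⟩
    have hinc := inc2 hKK b hbe
    have hih := ih hD'
    rw [e1, e2]
    omega
/-- Congruence for `deleteEdges` modulo the edge set. -/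
lemma deleteEdges_congr (G : SimpleGraph V) {s t : Set (Sym2 V)}
    (h : ∀ e ∈ G.edgeSet, e ∈ s ↔ e ∈ t) : G.deleteEdges s = G.deleteEdges t := by
  ext u v
  simp only [deleteEdges_adj]
  constructor
  · rintro ⟨ha, hs⟩
    exact ⟨ha, fun ht => hs ((h _ ((G.mem_edgeSet).mpr ha)).mpr ht)⟩
  · rintro ⟨ha, ht⟩
    exact ⟨ha, fun hs => ht ((h _ ((G.mem_edgeSet).mpr ha)).mp hs)⟩

lemma colorCount_le_of_le (hle : F ≤ G) (color : Sym2 V → CO) (c : CO) :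
    colorCount F color c ≤ colorCount G color c := by
  exact Nat.card_le_card_of_injective
    (Subtype.map id (fun e h => ⟨edgeSet_mono hle h.1, h.2⟩))
    (Subtype.map_injective _ Function.injective_id)

lemma colorCount_eq_ncard (G : SimpleGraph V) (color : Sym2 V → CO) (c : CO) :
    colorCount G color c = {e : Sym2 V | e ∈ G.edgeSet ∧ color e = c}.ncard :=
  Nat.card_coe_set_eq _

/-- supermodularity of `omega ∘ delR`. -/
lemma sup_delR (color : Sym2 V → CO) (R1 R2 : Finset CO) :
    omega (delR G color R1) + omega (delR G color R2) ≤
      omega (delR G color (R1 ∪ R2)) + omega (delR G color (R1 ∩ R2)) := by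
  classical
  set S : Set (Sym2 V) := {e | color e ∈ R1 ∩ R2}
  set S' : Set (Sym2 V) := {e | color e ∈ R1}
  have hfin : ({e : Sym2 V | e ∈ G.edgeSet ∧ color e ∈ R2 ∧ color e ∉ R1}).Finite :=
    Set.toFinite _
  set D : Finset (Sym2 V) := hfin.toFinset
  have hD : ∀ e ∈ D, e ∈ G.edgeSet ∧ e ∉ S' := by
    intro e he
    rw [Set.Finite.mem_toFinset] at he
    exact ⟨he.1, he.2.2⟩
  have hSS : S ⊆ S' := fun e he => Finset.mem_inter.mp he |>.1
  have h1 : G.deleteEdges (S ∪ ↑D) = delR G color R2 := by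
    apply deleteEdges_congr
    intro e he
    simp only [S, Set.mem_union, Set.mem_setOf_eq, Finset.mem_coe, D,
      Set.Finite.mem_toFinset, delR, Finset.mem_inter]
    constructor
    · rintro (⟨_, h⟩ | ⟨_, h, _⟩) <;> exact h
    · intro h2
      by_cases h3 : color e ∈ R1
      · exact Or.inl ⟨h3, h2⟩
      · exact Or.inr ⟨he, h2, h3⟩
  have h2 : G.deleteEdges (S' ∪ ↑D) = delR G color (R1 ∪ R2) := by
    apply deleteEdges_congr
    intro e he
    simp only [S', Set.mem_union, Set.mem_setOf_eq, Finset.mem_coe, D,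
      Set.Finite.mem_toFinset, delR, Finset.mem_union]
    constructor
    · rintro (h | ⟨_, h, _⟩)
      · exact Or.inl h
      · exact Or.inr h
    · rintro (h | h)
      · exact Or.inl h
      · by_cases h3 : color e ∈ R1
        · exact Or.inl h3
        · exact Or.inr ⟨he, h, h3⟩
  have := tel (G := G) S S' hSS D hD
  rw [h1, h2] at this
  have hS : G.deleteEdges S = delR G color (R1 ∩ R2) := rfl
  have hS' : G.deleteEdges S' = delR G color R1 := rfl
  rw [hS, hS'] at this
  omega


namespace SUFF
variable (color : Sym2 V → CO) (f : CO → ℕ) (m : ℕ)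

lemma tight_union
    (hcond : ∀ R : Finset CO, omega (delR G color R) ≤ m + ∑ c ∈ R, f c)
    (T : Finset (Finset CO)) (hT : T.Nonempty)
    (htight : ∀ R ∈ T, m + ∑ c ∈ R, f c ≤ omega (delR G color R)) :
    m + ∑ c ∈ T.sup id, f c ≤ omega (delR G color (T.sup id)) := by
  revert htight
  induction hT using Finset.Nonempty.cons_induction with
  | singleton R =>
    intro htight
    simpa using htight R (Finset.mem_singleton_self R)
  | cons R T hRT hTne ih =>
    intro htight
    have h1 := htight R (Finset.mem_cons_self R T)
    have h2 := ih (fun R' hR' => htight R' (Finset.mem_cons.mpr (Or.inr hR')))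
    have h3 := sup_delR (G := G) color R (T.sup id)
    have h4 := hcond (R ∩ T.sup id)
    have h5 : ∑ c ∈ R ∪ T.sup id, f c + ∑ c ∈ R ∩ T.sup id, f c
        = ∑ c ∈ R, f c + ∑ c ∈ T.sup id, f c := Finset.sum_union_inter
    have h6 : (Finset.cons R T hRT).sup id = R ∪ T.sup id := by
      rw [Finset.sup_cons]; rfl
    rw [h6]
    omega

lemma suff (hm : m ≤ Fintype.card V) :
    ∀ (G : SimpleGraph V),
      (∀ R : Finset CO, omega (delR G color R) ≤ m + ∑ c ∈ R, f c) →
      ∃ F, F ≤ G ∧ F.IsAcyclic ∧ omega F = m ∧ IsChromatic F color f := by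
  intro G
  generalize hk : G.edgeSet.ncard = k
  induction k using Nat.strong_induction_on generalizing G with
  | _ k ih =>
    intro hcond
    by_cases hchr : IsChromatic G color f
    · have homega : omega G ≤ m := by
        have h := hcond ∅
        simpa [delR] using h
      obtain ⟨F0, hF0le, hF0ac, hF0r⟩ := exists_spanning_forest G
      have hom0 : omega F0 = omega G := omega_eq_of_reach hF0le hF0r
      obtain ⟨F, hFle, hFac, hFom⟩ := trim m hm F0 hF0ac (by omega)
      refine ⟨F, hFle.trans hF0le, hFac, hFom, fun c => ?_⟩
      calc colorCount F color c ≤ colorCount G color c :=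
            colorCount_le_of_le (hFle.trans hF0le) color c
        _ ≤ f c := hchr c
    · rw [IsChromatic] at hchr
      push_neg at hchr
      obtain ⟨c0, hc0⟩ := hchr
      set S0 : Set (Sym2 V) := {e | e ∈ G.edgeSet ∧ color e = c0} with hS0def
      have hS0fin : S0.Finite := Set.toFinite _
      have hcard : colorCount G color c0 = hS0fin.toFinset.card := by
        rw [colorCount_eq_ncard, Set.ncard_eq_toFinset_card _ hS0fin]
      have hmain : ∃ e ∈ S0, ∀ R : Finset CO,
          omega (G.deleteEdges ({e' | color e' ∈ R} ∪ {e})) ≤ m + ∑ c ∈ R, f c := by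
        by_contra hno
        push_neg at hno
        have hno' : ∀ e ∈ hS0fin.toFinset, ∃ R : Finset CO,
            m + ∑ c ∈ R, f c + 1 ≤
              omega (G.deleteEdges ({e' | color e' ∈ R} ∪ {e})) := by
          intro e he
          rw [Set.Finite.mem_toFinset] at he
          obtain ⟨R, hR⟩ := hno e he
          exact ⟨R, by omega⟩
        choose Rch hRch using hno'
        have hkey : ∀ e (he : e ∈ hS0fin.toFinset),
            c0 ∉ Rch e he ∧ BrgE (delR G color (Rch e he)) e := by
          intro e he
          have heS0 : e ∈ S0 := (Set.Finite.mem_toFinset _).mp he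
          obtain ⟨heG, hecol⟩ := heS0
          have hnotin : c0 ∉ Rch e he := by
            intro hin
            have hun : ({e' | color e' ∈ Rch e he} : Set (Sym2 V)) ∪ {e} =
                {e' | color e' ∈ Rch e he} := by
              apply Set.union_eq_self_of_subset_right
              intro x hx
              rw [Set.mem_singleton_iff] at hx
              subst hx
              show color x ∈ Rch x he
              rw [hecol]; exact hin
            have h1 := hRch e he
            rw [hun] at h1
            have h2 := hcond (Rch e he)
            rw [delR] at h2
            omega
          refine ⟨hnotin, ?_, ?_⟩
          · rw [delR, edgeSet_deleteEdges]
            refine ⟨heG, ?_⟩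
            show ¬ color e ∈ Rch e he
            rw [hecol]; exact hnotin
          · have hdd : (delR G color (Rch e he)).deleteEdges {e} =
                G.deleteEdges ({e' | color e' ∈ Rch e he} ∪ {e}) := by
              rw [delR, deleteEdges_deleteEdges]
            rw [hdd]
            have h1 := hRch e he
            have h2 := hcond (Rch e he)
            omega
        have hne : hS0fin.toFinset.Nonempty := by
          rw [← Finset.card_pos, ← hcard]; omega
        set T : Finset (Finset CO) :=
          hS0fin.toFinset.attach.image (fun x => Rch x.1 x.2) with hTdef
        have hTne : T.Nonempty := (Finset.attach_nonempty_iff.mpr hne).image _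
        set Rstar : Finset CO := T.sup id with hRstardef
        have hc0star : c0 ∉ Rstar := by
          intro hin
          rw [hRstardef, Finset.mem_sup] at hin
          obtain ⟨R, hRT, hR⟩ := hin
          rw [hTdef, Finset.mem_image] at hRT
          obtain ⟨x, _, rfl⟩ := hRT
          exact (hkey x.1 x.2).1 hR
        have hsub : ∀ e (he : e ∈ hS0fin.toFinset), Rch e he ⊆ Rstar := by
          intro e he
          have hmem : Rch e he ∈ T := by
            rw [hTdef, Finset.mem_image]
            exact ⟨⟨e, he⟩, Finset.mem_attach _ _, rfl⟩
          exact Finset.le_sup (f := id) hmem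
        have htight : m + ∑ c ∈ Rstar, f c ≤ omega (delR G color Rstar) := by
          apply tight_union color f m hcond T hTne
          intro R hRT
          rw [hTdef, Finset.mem_image] at hRT
          obtain ⟨x, _, rfl⟩ := hRT
          have h1 := (hkey x.1 x.2).2.2
          have hdd : (delR G color (Rch x.1 x.2)).deleteEdges {x.1} =
              G.deleteEdges ({e' | color e' ∈ Rch x.1 x.2} ∪ {x.1}) := by
            rw [delR, deleteEdges_deleteEdges]
          have h2 := hRch x.1 x.2
          have h3 := omega_deleteEdges_single_le (delR G color (Rch x.1 x.2)) x.1
          rw [hdd] at h3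
          omega
        have hbridges : ∀ e ∈ hS0fin.toFinset, BrgE (delR G color Rstar) e := by
          intro e he
          have heS0 : e ∈ S0 := (Set.Finite.mem_toFinset _).mp he
          obtain ⟨heG, hecol⟩ := heS0
          refine brgE_anti ?_ e ?_ (hkey e he).2
          · rw [delR, delR]
            exact deleteEdges_anti (fun x hx => by
              simp only [Set.mem_setOf_eq] at hx ⊢
              exact hsub e he hx)
          · rw [delR, edgeSet_deleteEdges]
            refine ⟨heG, ?_⟩
            show ¬ color e ∈ Rstar
            rw [hecol]; exact hc0star
        have hfinal := omega_deleteEdges_bridges hS0fin.toFinset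
          (delR G color Rstar) hbridges
        have hid : (delR G color Rstar).deleteEdges ↑hS0fin.toFinset =
            delR G color (insert c0 Rstar) := by
          rw [delR, deleteEdges_deleteEdges]
          show G.deleteEdges _ = G.deleteEdges _
          apply deleteEdges_congr
          intro e he
          simp only [Set.mem_union, Set.mem_setOf_eq, Finset.mem_coe,
            Set.Finite.mem_toFinset, Finset.mem_insert]
          constructor
          · rintro (h | h)
            · exact Or.inr h
            · exact Or.inl h.2
          · rintro (h | h)
            · exact Or.inr ⟨he, h⟩
            · exact Or.inl h
        rw [hid] at hfinal
        have hcond' := hcond (insert c0 Rstar)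
        rw [Finset.sum_insert hc0star] at hcond'
        rw [← hcard] at hfinal
        omega
      obtain ⟨e, heS0, hekey⟩ := hmain
      have hG' : ∀ R : Finset CO,
          omega (delR (G.deleteEdges {e}) color R) ≤ m + ∑ c ∈ R, f c := by
        intro R
        have hrw : delR (G.deleteEdges {e}) color R =
            G.deleteEdges ({e' | color e' ∈ R} ∪ {e}) := by
          rw [delR, deleteEdges_deleteEdges, Set.union_comm]
        rw [hrw]
        exact hekey R
      have hlt : (G.deleteEdges {e}).edgeSet.ncard < k :=
        hk ▸ edgeSet_ncard_deleteEdges_lt heS0.1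
      obtain ⟨F, hF1, hF2, hF3, hF4⟩ := ih _ hlt (G.deleteEdges {e}) rfl hG'
      exact ⟨F, hF1.trans (deleteEdges_le _), hF2, hF3, hF4⟩
end SUFF

lemma sum_mul_succ_le {ι : Type*} (B : Finset ι) (b : ι → ℕ) :
    ∑ i ∈ B, b i * (b i + 1) ≤ (∑ i ∈ B, b i) * ((∑ i ∈ B, b i) + 1) := by
  classical
  induction B using Finset.induction_on with
  | empty => simp
  | @insert a B ha ih =>
    rw [Finset.sum_insert ha, Finset.sum_insert ha]
    nlinarith [ih, Nat.zero_le (b a * ∑ i ∈ B, b i)]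

/-- Edge-count bound via number of components. -/
lemma two_mul_ncard_le (H : SimpleGraph V) :
    2 * H.edgeSet.ncard ≤
      (Fintype.card V - omega H) * ((Fintype.card V - omega H) + 1) := by
  classical
  letI : Fintype H.ConnectedComponent := Fintype.ofFinite _
  letI : DecidableRel H.Adj := Classical.decRel _
  have homega : omega H = Fintype.card H.ConnectedComponent :=
    Nat.card_eq_fintype_card
  set n := Fintype.card V with hn
  set t := Fintype.card H.ConnectedComponent with ht
  -- the pair set
  set S : Finset (V × V) := univ.filter (fun p : V × V =>
    p.1 ≠ p.2 ∧ H.connectedComponentMk p.1 = H.connectedComponentMk p.2) with hS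
  -- darts inject into S
  have hdart : 2 * H.edgeSet.ncard ≤ S.card := by
    have h1 := H.dart_card_eq_twice_card_edges
    have h2 : H.edgeSet.ncard = H.edgeFinset.card := by
      rw [Set.ncard_eq_toFinset_card']
      congr 1
    have h3 : (univ : Finset H.Dart).card ≤ S.card := by
      apply Finset.card_le_card_of_injOn (fun d => d.toProd)
      · intro d _
        rw [hS, Finset.mem_coe, Finset.mem_filter]
        exact ⟨Finset.mem_univ _, d.adj.ne,
          ConnectedComponent.connectedComponentMk_eq_of_adj d.adj⟩
      · intro d1 _ d2 _ hd
        exact Dart.toProd_injective hd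
    have h4 : Fintype.card H.Dart = (univ : Finset H.Dart).card := Finset.card_univ.symm
    omega
  -- fibers
  set VK : H.ConnectedComponent → Finset V :=
    fun K => univ.filter (fun v => H.connectedComponentMk v = K) with hVK
  have hfib : S.card = ∑ K : H.ConnectedComponent, ((VK K).card * (VK K).card - (VK K).card) := by
    rw [Finset.card_eq_sum_card_fiberwise
      (f := fun p : V × V => H.connectedComponentMk p.1) (t := univ)
      (fun p _ => Finset.mem_univ _)]
    apply Finset.sum_congr rfl
    intro K _
    have : S.filter (fun p : V × V => H.connectedComponentMk p.1 = K) = (VK K).offDiag := by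
      ext p
      rw [Finset.mem_filter, hS, Finset.mem_filter, Finset.mem_offDiag, hVK]
      simp only [Finset.mem_filter, Finset.mem_univ, true_and]
      constructor
      · rintro ⟨⟨hne, hmk⟩, hK⟩
        exact ⟨hK, by rw [← hmk]; exact hK, hne⟩
      · rintro ⟨h1, h2, h3⟩
        exact ⟨⟨h3, by rw [h1, h2]⟩, h1⟩
    rw [this, Finset.offDiag_card]
  -- each fiber is nonempty
  have hpos : ∀ K : H.ConnectedComponent, 1 ≤ (VK K).card := by
    intro K
    obtain ⟨v, rfl⟩ := K.exists_rep
    have hv : v ∈ VK (H.connectedComponentMk v) := by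
      rw [hVK]
      exact Finset.mem_filter.mpr ⟨Finset.mem_univ _, rfl⟩
    exact Finset.card_pos.mpr ⟨v, hv⟩
  -- sum of fiber sizes is n
  have hsum : ∑ K : H.ConnectedComponent, (VK K).card = n := by
    have := Finset.card_eq_sum_card_fiberwise
        (s := (univ : Finset V)) (f := fun v : V => H.connectedComponentMk v) (t := univ)
        (fun v _ => Finset.mem_univ _)
    rw [Finset.card_univ] at this
    rw [hn, this]
  -- switch to b = size - 1
  have hB : ∑ K : H.ConnectedComponent, ((VK K).card - 1) + t = n := by
    have hx : ∑ K : H.ConnectedComponent, (((VK K).card - 1) + 1) =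
        ∑ K : H.ConnectedComponent, (VK K).card :=
      Finset.sum_congr rfl (fun K _ => by have := hpos K; omega)
    rw [Finset.sum_add_distrib, Finset.sum_const, smul_eq_mul, mul_one,
      Finset.card_univ] at hx
    omega
  have hsq : ∀ a : ℕ, 1 ≤ a → a * a - a = (a - 1) * ((a - 1) + 1) := by
    intro a ha
    cases a with
    | zero => omega
    | succ b =>
      rw [Nat.succ_mul, Nat.add_sub_cancel, Nat.succ_sub_one]
  have hfib2 : S.card = ∑ K : H.ConnectedComponent,
      ((VK K).card - 1) * (((VK K).card - 1) + 1) := by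
    rw [hfib]
    exact Finset.sum_congr rfl (fun K _ => hsq _ (hpos K))
  have hps := sum_mul_succ_le (univ : Finset H.ConnectedComponent)
    (fun K => (VK K).card - 1)
  have hnt : n - t = ∑ K : H.ConnectedComponent, ((VK K).card - 1) := by omega
  rw [homega, hnt]
  calc 2 * H.edgeSet.ncard ≤ S.card := hdart
    _ = _ := hfib2
    _ ≤ _ := hps

lemma ncard_colored (G : SimpleGraph V) (color : Sym2 V → CO) (R : Finset CO) :
    ({e : Sym2 V | e ∈ G.edgeSet ∧ color e ∈ R}).ncard =
      ∑ c ∈ R, colorCount G color c := by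
  classical
  have hfin : ({e : Sym2 V | e ∈ G.edgeSet ∧ color e ∈ R}).Finite := Set.toFinite _
  rw [Set.ncard_eq_toFinset_card _ hfin,
    Finset.card_eq_sum_card_fiberwise (f := color) (t := R)
      (fun e he => ((Set.Finite.mem_toFinset _).mp he).2)]
  apply Finset.sum_congr rfl
  intro c hc
  rw [colorCount_eq_ncard, Set.ncard_eq_toFinset_card _ (Set.toFinite _)]
  congr 1
  ext e
  rw [Finset.mem_filter, Set.Finite.mem_toFinset, Set.Finite.mem_toFinset]
  constructor
  · rintro ⟨⟨h1, _⟩, h3⟩; exact ⟨h1, h3⟩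
  · rintro ⟨h1, h2⟩; exact ⟨⟨h1, h2 ▸ hc⟩, h2⟩


end Aux17

open Aux17 Aux17.SUFF in
theorem stmt17 {V C : Type*} [Fintype V] (G : SimpleGraph V) (color : Sym2 V → C)
    (f g : C → ℕ) (n m : ℕ) (hn : Fintype.card V = n)
    (hm1 : 1 ≤ m) (hm2 : m ≤ n - 1)
    (hg : IsChromatic G color g)
    (hfg : ∀ c, (g c : ℚ) ≤ (Nat.card G.edgeSet : ℚ) / ((n : ℚ) - m) * f c)
    (hno : ¬ ∃ F : SimpleGraph V, F ≤ G ∧ F.IsAcyclic ∧ omega F = m ∧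
      IsChromatic F color f) :
    Nat.card G.edgeSet ≤ (n - m).choose 2 := by
  classical
  have hn2 : 2 ≤ n := by omega
  set N := n - m with hN
  have hN1 : 1 ≤ N := by omega
  -- there is a violated condition
  have hnc : ¬ ∀ R : Finset C, omega (delR G color R) ≤ m + ∑ c ∈ R, f c := by
    intro hcond
    obtain ⟨F, h1, h2, h3, h4⟩ := suff color f m (by omega) G hcond
    exact hno ⟨F, h1, h2, h3, h4⟩
  push_neg at hnc
  obtain ⟨R, hR⟩ := hnc
  set H := delR G color R with hH
  set s := ∑ c ∈ R, f c with hs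
  set t := omega H with htdef
  have ht : m + s < t := hR
  have htn : t ≤ n := hn ▸ omega_le_card H
  have hsN : s + 1 ≤ N := by omega
  set q := n - m - 1 - s with hq
  set eG := G.edgeSet.ncard with heG
  set eH := H.edgeSet.ncard with heH
  set eC := ({e : Sym2 V | e ∈ G.edgeSet ∧ color e ∈ R}).ncard with heC
  have hcast : Nat.card G.edgeSet = eG := Nat.card_coe_set_eq _
  rw [hcast]
  -- edge split
  have hsplit : eC + eH = eG := by
    have h1 : H.edgeSet = G.edgeSet \ {e | color e ∈ R} := by
      rw [hH, delR, edgeSet_deleteEdges]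
    have h2 : ({e : Sym2 V | e ∈ G.edgeSet ∧ color e ∈ R}) =
        G.edgeSet ∩ {e | color e ∈ R} := rfl
    rw [heC, heH, h1, h2]
    exact Set.ncard_inter_add_ncard_diff_eq_ncard _ _ (Set.toFinite _)
  -- colored edge count bound via ℚ
  have hkey : eC * N ≤ eG * s := by
    have h0 : eC = ∑ c ∈ R, colorCount G color c := ncard_colored G color R
    have h1 : eC ≤ ∑ c ∈ R, g c := by
      rw [h0]; exact Finset.sum_le_sum (fun c _ => hg c)
    have hNQ : ((n : ℚ) - m) = (N : ℚ) := by
      rw [hN, Nat.cast_sub (by omega)]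
    have h2 : (eC : ℚ) ≤ (eG : ℚ) / N * s := by
      calc (eC : ℚ) ≤ ((∑ c ∈ R, g c : ℕ) : ℚ) := by exact_mod_cast h1
        _ = ∑ c ∈ R, ((g c : ℚ)) := by push_cast; ring
        _ ≤ ∑ c ∈ R, ((eG : ℚ) / N * f c) := by
            apply Finset.sum_le_sum
            intro c _
            have := hfg c
            rw [hcast, hNQ] at this
            exact this
        _ = (eG : ℚ) / N * s := by rw [hs]; push_cast; rw [Finset.mul_sum]
    have hNpos : (0 : ℚ) < N := by exact_mod_cast hN1
    have h3 : (eC : ℚ) * N ≤ (eG : ℚ) * s := by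
      have := mul_le_mul_of_nonneg_right h2 (le_of_lt hNpos)
      calc (eC : ℚ) * N ≤ (eG : ℚ) / N * s * N := this
        _ = (eG : ℚ) * s := by field_simp
    exact_mod_cast h3
  -- uncolored edge bound
  have hedge : 2 * eH ≤ q * (q + 1) := by
    have h1 := two_mul_ncard_le H
    rw [hn, ← htdef] at h1
    have h2 : n - t ≤ q := by omega
    calc 2 * eH ≤ (n - t) * ((n - t) + 1) := h1
      _ ≤ q * (q + 1) := Nat.mul_le_mul h2 (by omega)
  -- final arithmetic
  have h4 : N = q + 1 + s := by omega
  have h5 : 2 * eG * N = 2 * eC * N + 2 * eH * N := by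
    rw [← hsplit]; ring
  have h6 : 2 * eC * N ≤ 2 * (eG * s) := by
    calc 2 * eC * N = 2 * (eC * N) := by ring
      _ ≤ 2 * (eG * s) := Nat.mul_le_mul_left 2 hkey
  have h7 : 2 * eH * N ≤ q * (q + 1) * N :=
    Nat.mul_le_mul_right N hedge
  have h8 : 2 * eG * N = 2 * (eG * s) + 2 * eG * (q + 1) := by
    rw [h4]; ring
  have h9 : 2 * eG * (q + 1) ≤ q * N * (q + 1) := by
    have : q * (q + 1) * N = q * N * (q + 1) := by ring
    linarith [h5, h6, h7, h8]
  have h10 : 2 * eG ≤ q * N := Nat.le_of_mul_le_mul_right h9 (by omega)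
  have h11 : q * N ≤ (N - 1) * N := Nat.mul_le_mul_right N (by omega)
  have h12 : 2 * eG ≤ N * (N - 1) := by
    calc 2 * eG ≤ (N - 1) * N := le_trans h10 h11
      _ = N * (N - 1) := Nat.mul_comm _ _
  rw [Nat.choose_two_right]
  rw [Nat.le_div_iff_mul_le (by omega : 0 < 2)]
  omega
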